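/- The ground state eigenvalue of the perturbed harmonic oscillator strictly exceeds h: under the stated hypotheses, λ > h. -/

import Mathlib

open MeasureTheory Real Filter Set

private lemma abs_mul_le_half_sq (a b : ℝ) : |a * b| ≤ (a ^ 2 + b ^ 2) / 2 := by
  rw [abs_le]
  constructor <;> nlinarith [sq_nonneg (a - b), sq_nonneg (a + b)]

private lemma integral_deriv_eq_zero_aux {f f' : ℝ → ℝ}
    (hd : ∀ x, HasDerivAt f (f' x) x) (hint : Integrable f')
    (htop : Tendsto f atTop (nhds 0)) (hbot : Tendsto f atBot (nhds 0)) :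
    ∫ x, f' x = 0 := by
  rw [← intervalIntegral.integral_Iic_add_Ioi (b := (0 : ℝ)) hint.integrableOn hint.integrableOn,
    integral_Iic_of_hasDerivAt_of_tendsto (hd 0).continuousAt.continuousWithinAt
      (fun x _ => hd x) hint.integrableOn hbot,
    integral_Ioi_of_hasDerivAt_of_tendsto (hd 0).continuousAt.continuousWithinAt
      (fun x _ => hd x) hint.integrableOn htop]
  ring

/-- The ground state eigenvalue of the perturbed harmonic oscillator strictly
exceeds `h`. -/
theorem ground_state_eigenvalue_gt_h
    (h : ℝ) (hh : 0 < h)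
    (ρ : ℝ → ℝ) (hρc : Continuous ρ) (hρsupp : HasCompactSupport ρ)
    (hρnonneg : ∀ x, 0 ≤ ρ x) (x₀ : ℝ) (hρpos : 0 < ρ x₀)
    (u : ℝ → ℝ) (hu : ContDiff ℝ 2 u)
    (hupos : ∀ x, 0 < u x)
    (hnorm : (∫ x, (u x) ^ 2) = 1)
    (hu'2 : Integrable (fun x => (deriv u x) ^ 2))
    (hxu2 : Integrable (fun x => (x * u x) ^ 2))
    (hdecay : Tendsto (fun x => u x * deriv u x) (cocompact ℝ) (nhds 0))
    (lam : ℝ)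
    (heig : ∀ x, -h ^ 2 * deriv (deriv u) x + (x ^ 2 + ρ x) * u x = lam * u x) :
    h < lam := by
  have hh2 : (h : ℝ) ^ 2 ≠ 0 := pow_ne_zero 2 hh.ne'
  -- differentiability facts
  have hdu : ∀ x, HasDerivAt u (deriv u x) x :=
    fun x => ((hu.differentiable two_ne_zero) x).hasDerivAt
  have hcd : ContDiff ℝ 1 (deriv u) :=
    (contDiff_succ_iff_deriv.mp (by exact_mod_cast hu)).2.2
  have hdu' : ∀ x, HasDerivAt (deriv u) (deriv (deriv u) x) x :=
    fun x => ((hcd.differentiable one_ne_zero) x).hasDerivAt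
  have hcu : Continuous u := hu.continuous
  have hcu' : Continuous (deriv u) := hcd.continuous
  have hcu'' : Continuous (deriv (deriv u)) := hcd.continuous_deriv le_rfl
  -- integrability of u^2
  have hu2 : Integrable (fun x => u x ^ 2) := by
    by_contra hc
    rw [integral_undef hc] at hnorm
    norm_num at hnorm
  -- integrability of ρ * u^2
  have hρu2 : Integrable (fun x => ρ x * u x ^ 2) := by
    obtain ⟨C, hC⟩ := hρc.bounded_above_of_compact_support hρsupp
    exact hu2.bdd_mul hρc.aestronglyMeasurable (ae_of_all _ hC)
  -- integrability of u * u''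
  have huu'' : Integrable (fun x => u x * deriv (deriv u) x) := by
    have hfe : (fun x => u x * deriv (deriv u) x)
        = fun x => ((x * u x) ^ 2 + ρ x * u x ^ 2 - lam * u x ^ 2) * (h ^ 2)⁻¹ := by
      funext x
      have e := heig x
      field_simp
      linear_combination (-(u x)) * e
    rw [hfe]
    exact ((hxu2.add hρu2).sub (hu2.const_mul lam)).mul_const _
  -- integrability of x * u * u'
  have hxuu' : Integrable (fun x => x * u x * deriv u x) := by
    refine ((hxu2.add hu'2).div_const 2).mono'
      (((continuous_id.mul hcu).mul hcu').aestronglyMeasurable) ?_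
    refine Eventually.of_forall fun x => ?_
    rw [norm_eq_abs]
    exact abs_mul_le_half_sq (x * u x) (deriv u x)
  -- integrability of x * u^2
  have hxu2' : Integrable (fun x => x * u x ^ 2) := by
    refine ((hxu2.add hu2).div_const 2).mono'
      ((continuous_id.mul (hcu.pow 2)).aestronglyMeasurable) ?_
    refine Eventually.of_forall fun x => ?_
    rw [norm_eq_abs, show x * u x ^ 2 = x * u x * u x from by ring]
    exact abs_mul_le_half_sq (x * u x) (u x)
  -- first integration by parts: ∫ (u'^2 + u u'') = 0
  have htop : Tendsto (fun x => u x * deriv u x) atTop (nhds 0) :=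
    hdecay.mono_left _root_.atTop_le_cocompact
  have hbot : Tendsto (fun x => u x * deriv u x) atBot (nhds 0) :=
    hdecay.mono_left _root_.atBot_le_cocompact
  have hIBP1 : ∫ x, (deriv u x ^ 2 + u x * deriv (deriv u) x) = 0 := by
    refine integral_deriv_eq_zero_aux (f := fun x => u x * deriv u x) ?_
      (hu'2.add huu'') htop hbot
    intro x
    have := (hdu x).fun_mul (hdu' x)
    exact this.congr_deriv (by ring)
  have hIuu'' : (∫ x, u x * deriv (deriv u) x) = -∫ x, deriv u x ^ 2 := by
    have := integral_add hu'2 huu''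
    rw [hIBP1] at this
    linarith [this]
  -- second: ∫ (u^2 + 2 x u u') = 0, via g = x u^2 tending to 0 at ±∞
  have hgd : ∀ x, HasDerivAt (fun y => y * u y ^ 2)
      (u x ^ 2 + 2 * (x * u x * deriv u x)) x := by
    intro x
    have := (hasDerivAt_id x).fun_mul ((hdu x).fun_pow 2)
    refine this.congr_deriv ?_
    simp only [id_eq, pow_one]
    push_cast
    ring
  have hg'int : Integrable (fun x => u x ^ 2 + 2 * (x * u x * deriv u x)) :=
    hu2.add (hxuu'.const_mul 2)
  have hgtop : Tendsto (fun x => x * u x ^ 2) atTop (nhds 0) :=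
    tendsto_zero_of_hasDerivAt_of_integrableOn_Ioi (a := 0)
      (fun x _ => hgd x) hg'int.integrableOn hxu2'.integrableOn
  have hgbot : Tendsto (fun x => x * u x ^ 2) atBot (nhds 0) :=
    tendsto_zero_of_hasDerivAt_of_integrableOn_Iic (a := 0)
      (fun x _ => hgd x) hg'int.integrableOn hxu2'.integrableOn
  have hIBP2 : ∫ x, (u x ^ 2 + 2 * (x * u x * deriv u x)) = 0 :=
    integral_deriv_eq_zero_aux hgd hg'int hgtop hgbot
  have hIxuu' : (∫ x, x * u x * deriv u x) = -(1 / 2) := by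
    have h1 := integral_add hu2 (hxuu'.const_mul 2)
    rw [hIBP2, hnorm, integral_const_mul] at h1
    linarith [h1]
  -- integrate the eigenvalue equation against u
  have heq : ∀ x, -h ^ 2 * (u x * deriv (deriv u) x) + ((x * u x) ^ 2 + ρ x * u x ^ 2)
      = lam * u x ^ 2 := by
    intro x
    linear_combination (u x) * heig x
  have hIeq : -h ^ 2 * (∫ x, u x * deriv (deriv u) x)
      + ((∫ x, (x * u x) ^ 2) + ∫ x, ρ x * u x ^ 2) = lam := by
    have h1 : ∫ x, (-h ^ 2 * (u x * deriv (deriv u) x) + ((x * u x) ^ 2 + ρ x * u x ^ 2))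
        = ∫ x, lam * u x ^ 2 := by
      congr 1
      funext x
      exact heq x
    have hsum : Integrable (fun x => (x * u x) ^ 2 + ρ x * u x ^ 2) := hxu2.add hρu2
    rw [integral_add (huu''.const_mul (-h ^ 2)) hsum,
      integral_add hxu2 hρu2, integral_const_mul, integral_const_mul, hnorm] at h1
    simpa using h1
  -- positivity of the perturbation term
  have hCpos : 0 < ∫ x, ρ x * u x ^ 2 := by
    rw [integral_pos_iff_support_of_nonneg
      (fun x => mul_nonneg (hρnonneg x) (sq_nonneg _)) hρu2]
    have hopen : IsOpen ((fun x => ρ x * u x ^ 2) ⁻¹' Ioi 0) :=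
      (hρc.mul (hcu.pow 2)).isOpen_preimage _ isOpen_Ioi
    have hsub : (fun x => ρ x * u x ^ 2) ⁻¹' Ioi 0 ⊆
        Function.support fun x => ρ x * u x ^ 2 := fun x hx => ne_of_gt hx
    refine lt_of_lt_of_le (hopen.measure_pos volume ⟨x₀, ?_⟩) (measure_mono hsub)
    exact mul_pos hρpos (pow_pos (hupos x₀) 2)
  -- the key inequality
  have hmono : (∫ x, -(2 * h) * (x * u x * deriv u x))
      ≤ ∫ x, (h ^ 2 * deriv u x ^ 2 + (x * u x) ^ 2) := by
    refine integral_mono (hxuu'.const_mul _) ((hu'2.const_mul _).add hxu2) fun x => ?_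
    nlinarith [sq_nonneg (h * deriv u x + x * u x)]
  rw [integral_const_mul, hIxuu'] at hmono
  rw [integral_add (hu'2.const_mul _) hxu2, integral_const_mul] at hmono
  rw [hIuu''] at hIeq
  nlinarith [hCpos, hmono, hIeq, hh]
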